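/- Define the k-linear isomorphism f : R̄^{−p,*}(K) → B^{−p,*}(K) on basis elements by f(ω_I y_L) = ε(I,L) s_I t_L, where ε(I,L) is the sign of the permutation converting the concatenation IL into an increasing sequence. Then f commutes with the differentials up to the sign (−1)^p: for α ∈ R̄^{−p,*}(K), f(d_{R̄}(α)) = (−1)^p d_B(f(α)). -/

import Mathlib

/-!
STATEMENT 9.  The `k`-linear map `f : R̄(K) → B(K)` defined on basis monomials by
`f(ω_I y_L) = ε(I,L) s_I t_L`, where `ε(I,L) = (−1)^{∑_{i∈I} #{l∈L : l<i}}` is the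
sign of the permutation converting the concatenation `IL` into an increasing
sequence, is a `k`-module isomorphism and commutes with the differentials up to
the sign `(−1)^p` on `R̄^{−p,*}(K)`: for `α` of ω-length `p`,
`f(d_{R̄}(α)) = (−1)^p d_B(f(α))`.  Both `R̄(K)` and `B(K)` are modelled by their
monomial bases `(I,L)` with the explicit differentials of the paper.
-/

open Finsupp

variable (k : Type) [CommRing k] (m : ℕ) (K : Finset (Fin m) → Prop) [DecidablePred K]

abbrev MonMod (k : Type) [CommRing k] (m : ℕ) := (Finset (Fin m) × Finset (Fin m)) →₀ k

/-- The differential of `R̄(K)`: sign `(−1)^{k+1}`, `k` the position of `i` in `I`. -/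
noncomputable def dRbar : MonMod k m →ₗ[k] MonMod k m :=
  Finsupp.lift (MonMod k m) k _ fun p =>
    ∑ i ∈ p.1,
      if i ∉ p.2 ∧ K (insert i p.2) then
        Finsupp.single (p.1.erase i, insert i p.2)
          ((-1 : k) ^ ((p.1.filter fun j => j ≤ i).card + 1))
      else 0

/-- The differential of `B(K)`: sign `(−1)^{r+1}`, `r = #{l ∈ L : l < i}`. -/
noncomputable def dB : MonMod k m →ₗ[k] MonMod k m :=
  Finsupp.lift (MonMod k m) k _ fun p =>
    ∑ i ∈ p.1,
      if i ∉ p.2 ∧ K (insert i p.2) then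
        Finsupp.single (p.1.erase i, insert i p.2)
          ((-1 : k) ^ ((p.2.filter fun l => l < i).card + 1))
      else 0

/-- `f(ω_I y_L) = ε(I,L) s_I t_L`, `ε(I,L)` the sorting sign of the concatenation `IL`. -/
noncomputable def fRB : MonMod k m →ₗ[k] MonMod k m :=
  Finsupp.lift (MonMod k m) k _ fun p =>
    Finsupp.single p ((-1 : k) ^ (∑ i ∈ p.1, (p.2.filter fun l => l < i).card))

lemma lift_single (g : (Finset (Fin m) × Finset (Fin m)) → MonMod k m)
    (p : Finset (Fin m) × Finset (Fin m)) (c : k) :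
    Finsupp.lift (MonMod k m) k _ g (Finsupp.single p c) = c • g p := by
  simp [Finsupp.lift_apply, Finsupp.sum_single_index]

lemma fRB_single (p : Finset (Fin m) × Finset (Fin m)) (c : k) :
    fRB k m (Finsupp.single p c)
      = Finsupp.single p (c * (-1 : k) ^ (∑ i ∈ p.1, (p.2.filter fun l => l < i).card)) := by
  rw [fRB, lift_single, Finsupp.smul_single, smul_eq_mul]

lemma fRB_invol (α : MonMod k m) : fRB k m (fRB k m α) = α := by
  induction α using Finsupp.induction_linear with
  | zero => simp
  | add a b ha hb => simp [map_add, ha, hb]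
  | single p c =>
      rw [fRB_single, fRB_single, mul_assoc, ← pow_add]
      have : Even ((∑ i ∈ p.1, (p.2.filter fun l => l < i).card)
          + (∑ i ∈ p.1, (p.2.filter fun l => l < i).card)) := ⟨_, rfl⟩
      rw [this.neg_one_pow, mul_one]

lemma count_key (I L : Finset (Fin m)) (i : Fin m) (hi : i ∈ I) (hiL : i ∉ L) :
    (∑ j ∈ I.erase i, ((insert i L).filter fun l => l < j).card)
      + (L.filter fun l => l < i).card + (I.filter fun j => j ≤ i).card
    = (∑ j ∈ I, (L.filter fun l => l < j).card) + I.card := by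
  have h1 : ∀ j ∈ I.erase i, ((insert i L).filter fun l => l < j).card
      = (L.filter fun l => l < j).card + if i < j then 1 else 0 := by
    intro j hj
    rw [Finset.filter_insert]
    split_ifs with h
    · rw [Finset.card_insert_of_notMem (by simp [hiL])]
    · simp
  rw [Finset.sum_congr rfl h1, Finset.sum_add_distrib]
  have h2 : (∑ j ∈ I.erase i, if i < j then 1 else 0) = (I.filter fun j => i < j).card := by
    rw [Finset.card_filter]
    rw [Finset.sum_erase _ (by simp)]
  have h3 : (I.filter fun j => i < j).card + (I.filter fun j => j ≤ i).card = I.card := by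
    have := Finset.card_filter_add_card_filter_not (s := I) (p := fun j => j ≤ i)
    simp only [not_le] at this
    omega
  have h4 : (∑ j ∈ I, (L.filter fun l => l < j).card)
      = (∑ j ∈ I.erase i, (L.filter fun l => l < j).card) + (L.filter fun l => l < i).card := by
    rw [eq_comm]; exact Finset.sum_erase_add I (fun j => (L.filter fun l => l < j).card) hi
  omega

lemma neg_one_pow_congr' (a b : ℕ) (h : a % 2 = b % 2) : ((-1 : k)) ^ a = (-1 : k) ^ b := by
  rcases Nat.even_or_odd a with ha | ha
  · rw [ha.neg_one_pow, (Nat.even_iff.mpr (by rw [← h]; exact Nat.even_iff.mp ha)).neg_one_pow]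
  · rw [ha.neg_one_pow, (Nat.odd_iff.mpr (by rw [← h]; exact Nat.odd_iff.mp ha)).neg_one_pow]

lemma sign_key (I L : Finset (Fin m)) (i : Fin m) (hi : i ∈ I) (hiL : i ∉ L) :
    ((-1 : k) ^ ((I.filter fun j => j ≤ i).card + 1))
        * (-1 : k) ^ (∑ j ∈ I.erase i, ((insert i L).filter fun l => l < j).card)
      = (-1 : k) ^ I.card * ((-1 : k) ^ (∑ j ∈ I, (L.filter fun l => l < j).card)
        * (-1 : k) ^ ((L.filter fun l => l < i).card + 1)) := by
  rw [← pow_add, ← pow_add, ← pow_add]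
  apply neg_one_pow_congr'
  have key := count_key m I L i hi hiL
  omega

theorem f_commutes_with_differentials_up_to_sign :
    Function.Bijective (fRB k m) ∧
    ∀ (p : ℕ) (α : MonMod k m),
      α ∈ Finsupp.supported k k {q : Finset (Fin m) × Finset (Fin m) | q.1.card = p} →
      fRB k m (dRbar k m K α) = ((-1 : k) ^ p) • dB k m K (fRB k m α) := by
  constructor
  · exact Function.Involutive.bijective (fRB_invol k m)
  · intro p α hα
    rw [Finsupp.supported_eq_span_single] at hα
    induction hα using Submodule.span_induction with
    | mem x hx =>
        obtain ⟨q, hq, rfl⟩ := hx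
        have hq' : q.1.card = p := hq
        rw [dRbar, lift_single, one_smul, map_sum, fRB_single, one_mul, dB, lift_single,
          Finset.smul_sum, Finset.smul_sum]
        refine Finset.sum_congr rfl fun i hi => ?_
        split_ifs with h
        · rw [fRB_single, Finsupp.smul_single, Finsupp.smul_single, smul_eq_mul, smul_eq_mul,
            ← hq']
          exact congrArg _ (sign_key k m q.1 q.2 i hi h.1)
        · simp
    | zero => simp
    | add x y _ _ hx hy => simp [map_add, hx, hy]
    | smul c x _ hx => rw [map_smul, map_smul, hx, map_smul, map_smul, smul_comm]
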